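/- arXiv:2412.05793 — 2 statements merged into one kernel-verified Lean document; each statement's English description precedes it below -/
import Mathlib

section
/- Interpolation step with weak Lorentz norm: let Ω be a measure space, 3/2 < r < ∞, and choose 3/2 < r₁ < r < r₂ < ∞ with 2/r = 1/r₁ + 1/r₂. Then for measurable functions θ and v on Ω, ∫ |θ| |v|² ≤ C ‖θ‖_{L^{r,∞}} ‖v‖_{L^{2r₁/(r₁−1)}} ‖v‖_{L^{2r₂/(r₂−1)}}, with C depending only on r, r₁, r₂. -/
open MeasureTheory ENNReal
open scoped NNReal

lemma holder_aux {α : Type} [MeasurableSpace α] (μ : Measure α) (v : α → ℝ)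
    (hv : Measurable v) {s : ℝ} (hs : 1 < s) {A : Set α} (hA : MeasurableSet A) :
    ∫⁻ x in A, ENNReal.ofReal ((v x) ^ 2) ∂μ ≤
      (eLpNorm v (ENNReal.ofReal (2 * s / (s - 1))) μ) ^ (2:ℝ) * (μ A) ^ (1 / s) := by
  have hs0 : 0 < s := lt_trans one_pos hs
  have hs1 : 0 < s - 1 := by linarith
  have hq0 : 0 < 2 * s / (s - 1) := by positivity
  have hpq : (s / (s - 1)).HolderConjugate s := (Real.HolderConjugate.conjExponent hs).symm
  have hf : Measurable fun x => ENNReal.ofReal ((v x) ^ 2) :=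
    ENNReal.measurable_ofReal.comp ((hv.pow_const 2))
  have key := ENNReal.lintegral_mul_le_Lp_mul_Lq (μ.restrict A) hpq
    hf.aemeasurable (aemeasurable_const (b := (1:ℝ≥0∞)))
  simp only [Pi.mul_apply, mul_one, ENNReal.one_rpow, lintegral_one,
    Measure.restrict_apply_univ] at key
  refine le_trans key ?_
  gcongr ?_ * _
  have h1 : ∀ x, (ENNReal.ofReal ((v x) ^ 2)) ^ (s / (s-1)) =
      (‖v x‖₊ : ℝ≥0∞) ^ (2 * s / (s-1)) := by
    intro x
    rw [← enorm_eq_nnnorm, Real.enorm_eq_ofReal_abs, ← sq_abs,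
      ← Real.rpow_natCast |v x| 2, ← ENNReal.ofReal_rpow_of_nonneg (abs_nonneg _) (by norm_num),
      ← ENNReal.rpow_mul]
    congr 1
    push_cast
    ring
  have h2 : eLpNorm v (ENNReal.ofReal (2 * s / (s - 1))) μ =
      (∫⁻ x, (‖v x‖₊ : ℝ≥0∞) ^ (2 * s / (s-1)) ∂μ) ^ ((s-1) / (2*s)) := by
    rw [eLpNorm_eq_lintegral_rpow_enorm_toReal (by simp only [ne_eq, ENNReal.ofReal_eq_zero, not_le]; exact hq0) ENNReal.ofReal_ne_top,
      ENNReal.toReal_ofReal hq0.le]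
    simp only [enorm_eq_nnnorm]
    congr 1
    field_simp
  simp only [h1, h2, ← ENNReal.rpow_mul]
  have he : (s-1) / (2*s) * 2 = 1 / (s / (s-1)) := by field_simp
  rw [he]
  exact ENNReal.rpow_le_rpow (setLIntegral_le_lintegral _ _) (by positivity)


lemma layercake_aux {α : Type} [MeasurableSpace α] (μ : Measure α) (θ v : α → ℝ)
    (hθ : Measurable θ) (hv : Measurable v) :
    ∫⁻ x, ENNReal.ofReal (|θ x| * (v x) ^ 2) ∂μ =
      ∫⁻ t in Set.Ioi (0:ℝ), ∫⁻ x in {x | t < |θ x|}, ENNReal.ofReal ((v x) ^ 2) ∂μ := by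
  have hg : Measurable fun x => ENNReal.ofReal ((v x) ^ 2) :=
    ENNReal.measurable_ofReal.comp (hv.pow_const 2)
  set ν := μ.withDensity fun x => ENNReal.ofReal ((v x) ^ 2) with hν
  have h1 : ∫⁻ x, ENNReal.ofReal (|θ x| * (v x) ^ 2) ∂μ = ∫⁻ x, ENNReal.ofReal |θ x| ∂ν := by
    rw [hν, lintegral_withDensity_eq_lintegral_mul μ hg hθ.abs.ennreal_ofReal]
    congr 1
    ext x
    simp only [Pi.mul_apply]
    rw [← ENNReal.ofReal_mul (by positivity), mul_comm]
  rw [h1, lintegral_eq_lintegral_meas_lt ν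
    (Filter.Eventually.of_forall fun x => abs_nonneg _) (hθ.abs.aemeasurable)]
  refine setLIntegral_congr_fun measurableSet_Ioi (fun t _ => ?_)
  rw [hν, withDensity_apply _ (measurableSet_lt measurable_const hθ.abs)]


lemma lint_Ioc {T c : ℝ} (hT : 0 < T) (hc0 : 0 < c) (hc : c < 1) :
    ∫⁻ t in Set.Ioc (0:ℝ) T, (ENNReal.ofReal t) ^ (-c) =
      ENNReal.ofReal (T ^ (1-c) / (1-c)) := by
  have h1 : ∫⁻ t in Set.Ioc (0:ℝ) T, (ENNReal.ofReal t) ^ (-c) =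
      ∫⁻ t in Set.Ioc (0:ℝ) T, ENNReal.ofReal (t ^ (-c)) :=
    setLIntegral_congr_fun measurableSet_Ioc
      (fun t ht => ENNReal.ofReal_rpow_of_pos ht.1)
  have hint : IntegrableOn (fun t : ℝ => t ^ (-c)) (Set.Ioc 0 T) :=
    (intervalIntegrable_iff_integrableOn_Ioc_of_le hT.le).1
      (intervalIntegral.intervalIntegrable_rpow' (by linarith))
  rw [h1, ← ofReal_integral_eq_lintegral_ofReal hint
    ((ae_restrict_iff' measurableSet_Ioc).2
      (Filter.Eventually.of_forall fun t ht => Real.rpow_nonneg ht.1.le _))]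
  congr 1
  rw [← intervalIntegral.integral_of_le hT.le,
    integral_rpow (Or.inl (by linarith : (-1:ℝ) < -c)),
    Real.zero_rpow (by linarith : -c + 1 ≠ 0)]
  norm_num
  ring_nf

lemma lint_Ioi {T c : ℝ} (hT : 0 < T) (hc : 1 < c) :
    ∫⁻ t in Set.Ioi T, (ENNReal.ofReal t) ^ (-c) =
      ENNReal.ofReal (T ^ (1-c) / (c-1)) := by
  have h1 : ∫⁻ t in Set.Ioi T, (ENNReal.ofReal t) ^ (-c) =
      ∫⁻ t in Set.Ioi T, ENNReal.ofReal (t ^ (-c)) :=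
    setLIntegral_congr_fun measurableSet_Ioi
      (fun t ht => ENNReal.ofReal_rpow_of_pos (hT.trans ht))
  have hint : IntegrableOn (fun t : ℝ => t ^ (-c)) (Set.Ioi T) :=
    integrableOn_Ioi_rpow_of_lt (by linarith : -c < -1) hT
  rw [h1, ← ofReal_integral_eq_lintegral_ofReal hint
    ((ae_restrict_iff' measurableSet_Ioi).2
      (Filter.Eventually.of_forall fun t ht => Real.rpow_nonneg (hT.trans ht).le _))]
  rw [integral_Ioi_rpow_of_lt (by linarith : -c < -1) hT]
  congr 1
  rw [div_eq_div_iff (by linarith) (by linarith)]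
  ring_nf


lemma real_algebra_aux {a b w n₁ n₂ : ℝ} (ha : 1 < a) (hab : a + b = 2)
    (hw : 0 < w) (h₁ : 0 < n₁) (h₂ : 0 < n₂) :
    n₂ ^ (2:ℕ) * w ^ b * ((w * ((n₁ ^ (2:ℕ) / n₂ ^ (2:ℕ)) ^ (1/(a-b)))) ^ (1-b) / (1-b))
      + n₁ ^ (2:ℕ) * w ^ a * ((w * ((n₁ ^ (2:ℕ) / n₂ ^ (2:ℕ)) ^ (1/(a-b)))) ^ (1-a) / (a-1))
      = (2/(a-1)) * (w * (n₁ * n₂)) := by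
  have hb1 : b < 1 := by linarith
  have hd : 0 < a - b := by linarith
  have hX0 : (0:ℝ) < n₁ ^ (2:ℕ) / n₂ ^ (2:ℕ) := by positivity
  have hfrac : n₁ ^ (2:ℕ) / n₂ ^ (2:ℕ) = (n₁ / n₂) ^ (2:ℝ) := by
    rw [show ((2:ℝ)) = ((2:ℕ):ℝ) by norm_num, Real.rpow_natCast, div_pow]
  have hXb : (w * ((n₁ ^ (2:ℕ) / n₂ ^ (2:ℕ)) ^ (1/(a-b)))) ^ (1-b)
      = w ^ (1-b) * (n₁ / n₂) := by
    rw [Real.mul_rpow hw.le (Real.rpow_nonneg hX0.le _), ← Real.rpow_mul hX0.le, hfrac,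
      ← Real.rpow_mul (by positivity)]
    have : 2 * (1/(a-b) * (1-b)) = 1 := by field_simp; linarith
    rw [this, Real.rpow_one]
  have hXa : (w * ((n₁ ^ (2:ℕ) / n₂ ^ (2:ℕ)) ^ (1/(a-b)))) ^ (1-a)
      = w ^ (1-a) * (n₂ / n₁) := by
    rw [Real.mul_rpow hw.le (Real.rpow_nonneg hX0.le _), ← Real.rpow_mul hX0.le, hfrac,
      ← Real.rpow_mul (by positivity)]
    have : 2 * (1/(a-b) * (1-a)) = -1 := by field_simp; linarith
    rw [this, Real.rpow_neg_one, inv_div]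
  rw [hXb, hXa]
  have e2 : w ^ b * w ^ (1-b) = w := by
    rw [← Real.rpow_add hw]; norm_num
  have e4 : w ^ a * w ^ (1-a) = w := by
    rw [← Real.rpow_add hw]; norm_num
  have t2eq : n₂ ^ (2:ℕ) * (n₁ / n₂) = n₁ * n₂ := by field_simp
  have t1eq : n₁ ^ (2:ℕ) * (n₂ / n₁) = n₁ * n₂ := by field_simp
  have hba : 1 - b = a - 1 := by linarith
  have ha1 : a - 1 ≠ 0 := by linarith
  calc n₂ ^ (2:ℕ) * w ^ b * (w ^ (1-b) * (n₁ / n₂) / (1-b))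
        + n₁ ^ (2:ℕ) * w ^ a * (w ^ (1-a) * (n₂ / n₁) / (a-1))
      = (w ^ b * w ^ (1-b)) * (n₂ ^ (2:ℕ) * (n₁ / n₂)) / (1-b)
        + (w ^ a * w ^ (1-a)) * (n₁ ^ (2:ℕ) * (n₂ / n₁)) / (a-1) := by ring
    _ = w * (n₁ * n₂) / (a-1) + w * (n₁ * n₂) / (a-1) := by rw [e2, e4, t2eq, t1eq, hba]
    _ = (2/(a-1)) * (w * (n₁ * n₂)) := by field_simp; ring



/-- The Lorentz quasinorm `‖f‖_{L^{p,q}}`; in particular `lorentzNorm μ r ⊤ f` is the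
weak-`L^r` norm `sup_{t>0} t μ{|f|>t}^{1/r}`. -/
noncomputable def lorentzNorm {α : Type*} [MeasurableSpace α] (μ : Measure α)
    (p : ℝ) (q : ℝ≥0∞) (f : α → ℝ) : ℝ≥0∞ :=
  if q = ⊤ then ⨆ t : ℝ, ⨆ _ : 0 < t, ENNReal.ofReal t * (μ {x | t < |f x|}) ^ (1 / p)
  else (∫⁻ t in Set.Ioi (0 : ℝ),
      ENNReal.ofReal p * (ENNReal.ofReal t) ^ (q.toReal - 1) *
        (μ {x | t < |f x|}) ^ (q.toReal / p)) ^ (1 / q.toReal)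

/-- Interpolation step with weak Lorentz norm: for `3/2 < r₁ < r < r₂ < ∞` with
`2/r = 1/r₁ + 1/r₂`, one has
`∫ |θ| |v|² ≤ C ‖θ‖_{L^{r,∞}} ‖v‖_{L^{2r₁/(r₁−1)}} ‖v‖_{L^{2r₂/(r₂−1)}}`,
with `C` depending only on `r, r₁, r₂`. -/
theorem weak_lorentz_interpolation_step (r r₁ r₂ : ℝ)
    (hr₁ : 3 / 2 < r₁) (h₁r : r₁ < r) (hrr₂ : r < r₂)
    (hsum : 2 / r = 1 / r₁ + 1 / r₂) :
    ∃ C : ℝ≥0, 0 < C ∧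
      ∀ (α : Type) (_ : MeasurableSpace α) (μ : Measure α) (θ v : α → ℝ),
        Measurable θ → Measurable v →
        (∫⁻ x, ENNReal.ofReal (|θ x| * (v x) ^ 2) ∂μ) ≤
          (C : ℝ≥0∞) * lorentzNorm μ r ⊤ θ *
            eLpNorm v (ENNReal.ofReal (2 * r₁ / (r₁ - 1))) μ *
            eLpNorm v (ENNReal.ofReal (2 * r₂ / (r₂ - 1))) μ := by
  have hr₁1 : (1:ℝ) < r₁ := by linarith
  have hr2 : (1:ℝ) < r := by linarith
  have hr₂1 : (1:ℝ) < r₂ := by linarith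
  have hr0 : (0:ℝ) < r := by linarith
  have hr₁0 : (0:ℝ) < r₁ := by linarith
  have hr₂0 : (0:ℝ) < r₂ := by linarith
  set a := r / r₁ with ha_def
  set b := r / r₂ with hb_def
  have ha1 : 1 < a := (one_lt_div hr₁0).2 h₁r
  have hb1 : b < 1 := (div_lt_one hr₂0).2 hrr₂
  have hb0 : 0 < b := by positivity
  have hab : a + b = 2 := by
    have h := hsum
    rw [ha_def, hb_def]
    field_simp
    field_simp at h
    linarith
  have hCpos : (0:ℝ) < 2 / (a - 1) := by
    have : 0 < a - 1 := by linarith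
    positivity
  refine ⟨(2 / (a - 1)).toNNReal, Real.toNNReal_pos.2 hCpos, ?_⟩
  intro α mα μ θ v hθ hv
  set W := lorentzNorm μ r ⊤ θ with hW_def
  set N₁ := eLpNorm v (ENNReal.ofReal (2 * r₁ / (r₁ - 1))) μ with hN₁_def
  set N₂ := eLpNorm v (ENNReal.ofReal (2 * r₂ / (r₂ - 1))) μ with hN₂_def
  have hWle : ∀ t : ℝ, 0 < t →
      ENNReal.ofReal t * (μ {x | t < |θ x|}) ^ (1 / r) ≤ W := by
    intro t ht
    rw [hW_def, lorentzNorm, if_pos rfl]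
    exact le_iSup₂ (f := fun t (_ : 0 < t) =>
      ENNReal.ofReal t * (μ {x | t < |θ x|}) ^ (1 / r)) t ht
  -- Case W = 0
  by_cases hW0 : W = 0
  · have hθ0 : ∀ᵐ x ∂μ, θ x = 0 := by
      have hnull : μ {x | θ x ≠ 0} = 0 := by
        have hsub : {x | θ x ≠ 0} ⊆ ⋃ n : ℕ, {x | (1:ℝ)/(n+1) < |θ x|} := by
          intro x hx
          obtain ⟨n, hn⟩ := exists_nat_one_div_lt (abs_pos.2 hx)
          exact Set.mem_iUnion.2 ⟨n, hn⟩
        refine measure_mono_null hsub (measure_iUnion_null fun n => ?_)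
        have ht : (0:ℝ) < 1/(n+1) := by positivity
        have h := hWle _ ht
        rw [hW0, le_zero_iff, mul_eq_zero] at h
        rcases h with h | h
        · exact absurd h (by simp only [ENNReal.ofReal_eq_zero, not_le]; positivity)
        · rcases (ENNReal.rpow_eq_zero_iff).1 h with ⟨h', _⟩ | ⟨_, h'⟩
          · exact h'
          · exact absurd h' (asymm (show (0:ℝ) < 1/r by positivity))
      exact hnull
    have hzero : ∫⁻ x, ENNReal.ofReal (|θ x| * (v x) ^ 2) ∂μ = 0 := by
      rw [← lintegral_zero]
      refine lintegral_congr_ae ?_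
      filter_upwards [hθ0] with x hx
      simp [hx]
    simp only [hzero, zero_le]
  -- Case N₁ = 0 or N₂ = 0
  by_cases hN₁0 : N₁ = 0
  · have hv0 : v =ᵐ[μ] 0 := by
      refine (eLpNorm_eq_zero_iff hv.aestronglyMeasurable ?_).1 hN₁0
      simp only [ne_eq, ENNReal.ofReal_eq_zero, not_le]
      exact div_pos (by linarith) (by linarith)
    have hzero : ∫⁻ x, ENNReal.ofReal (|θ x| * (v x) ^ 2) ∂μ = 0 := by
      rw [← lintegral_zero]
      refine lintegral_congr_ae ?_
      filter_upwards [hv0] with x hx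
      simp [Pi.zero_apply] at hx
      simp [hx]
    simp only [hzero, zero_le]
  by_cases hN₂0 : N₂ = 0
  · have hv0 : v =ᵐ[μ] 0 := by
      refine (eLpNorm_eq_zero_iff hv.aestronglyMeasurable ?_).1 hN₂0
      simp only [ne_eq, ENNReal.ofReal_eq_zero, not_le]
      exact div_pos (by linarith) (by linarith)
    have hzero : ∫⁻ x, ENNReal.ofReal (|θ x| * (v x) ^ 2) ∂μ = 0 := by
      rw [← lintegral_zero]
      refine lintegral_congr_ae ?_
      filter_upwards [hv0] with x hx
      simp [Pi.zero_apply] at hx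
      simp [hx]
    simp only [hzero, zero_le]
  -- Case one of the factors is ⊤
  have hCne : ((2 / (a - 1)).toNNReal : ℝ≥0∞) ≠ 0 := by
    simp only [ne_eq, ENNReal.coe_eq_zero, Real.toNNReal_eq_zero, not_le]
    exact hCpos
  by_cases htop : W = ⊤ ∨ N₁ = ⊤ ∨ N₂ = ⊤
  · have : ((2 / (a - 1)).toNNReal : ℝ≥0∞) * W * N₁ * N₂ = ⊤ := by
      rcases htop with h | h | h <;>
        simp [h, ENNReal.mul_eq_top, hW0, hN₁0, hN₂0, hCne]
    rw [this]
    exact le_top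
  push_neg at htop
  obtain ⟨hWt, hN₁t, hN₂t⟩ := htop
  -- all quantities are finite and positive now
  set w := W.toReal with hw_def
  set n₁ := N₁.toReal with hn₁_def
  set n₂ := N₂.toReal with hn₂_def
  have hwpos : 0 < w := ENNReal.toReal_pos hW0 hWt
  have hn₁ : 0 < n₁ := ENNReal.toReal_pos hN₁0 hN₁t
  have hn₂ : 0 < n₂ := ENNReal.toReal_pos hN₂0 hN₂t
  have hdab : 0 < a - b := by linarith
  set T := w * ((n₁ ^ (2:ℕ) / n₂ ^ (2:ℕ)) ^ (1/(a-b))) with hT_def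
  have hT : 0 < T := by positivity
  -- distribution bound
  have hD : ∀ t : ℝ, 0 < t →
      μ {x | t < |θ x|} ≤ W ^ r * (ENNReal.ofReal t) ^ (-r) := by
    intro t ht
    have h := hWle t ht
    have h0 : ENNReal.ofReal t ≠ 0 := by
      simp only [ne_eq, ENNReal.ofReal_eq_zero, not_le]; exact ht
    have h2 : (μ {x | t < |θ x|}) ^ (1/r) ≤ W / ENNReal.ofReal t := by
      rw [ENNReal.le_div_iff_mul_le (Or.inl h0) (Or.inl ENNReal.ofReal_ne_top)]
      rwa [mul_comm] at h
    have h3 := ENNReal.rpow_le_rpow h2 hr0.le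
    rw [← ENNReal.rpow_mul, one_div, inv_mul_cancel₀ hr0.ne', ENNReal.rpow_one] at h3
    refine h3.trans_eq ?_
    rw [ENNReal.div_rpow_of_nonneg _ _ hr0.le, div_eq_mul_inv, ← ENNReal.rpow_neg]
  -- Hölder + distribution bound, pointwise in t
  have hFbound : ∀ (s c : ℝ), 1 < s → c = r / s → ∀ t : ℝ, 0 < t →
      ∫⁻ x in {x | t < |θ x|}, ENNReal.ofReal ((v x) ^ 2) ∂μ ≤
        (eLpNorm v (ENNReal.ofReal (2 * s / (s - 1))) μ) ^ (2:ℝ) * W ^ c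
          * (ENNReal.ofReal t) ^ (-c) := by
    intro s c hs hc t ht
    have hs0 : 0 < s := lt_trans one_pos hs
    refine (holder_aux μ v hv hs (measurableSet_lt measurable_const hθ.abs)).trans ?_
    have h1 : (μ {x | t < |θ x|}) ^ (1/s) ≤ (W ^ r * (ENNReal.ofReal t) ^ (-r)) ^ (1/s) :=
      ENNReal.rpow_le_rpow (hD t ht) (by positivity)
    have h2 : (W ^ r * (ENNReal.ofReal t) ^ (-r)) ^ (1/s)
        = W ^ c * (ENNReal.ofReal t) ^ (-c) := by
      rw [ENNReal.mul_rpow_of_nonneg _ _ (by positivity), ← ENNReal.rpow_mul,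
        ← ENNReal.rpow_mul, hc]
      congr 2 <;> field_simp
    rw [mul_assoc]
    exact mul_le_mul_right (h1.trans_eq h2) _
  have hmeas_rb : Measurable fun t : ℝ => (ENNReal.ofReal t) ^ (-b) :=
    ENNReal.continuous_rpow_const.measurable.comp ENNReal.measurable_ofReal
  have hmeas_ra : Measurable fun t : ℝ => (ENNReal.ofReal t) ^ (-a) :=
    ENNReal.continuous_rpow_const.measurable.comp ENNReal.measurable_ofReal
  calc ∫⁻ x, ENNReal.ofReal (|θ x| * (v x) ^ 2) ∂μ
      = ∫⁻ t in Set.Ioi (0:ℝ), ∫⁻ x in {x | t < |θ x|}, ENNReal.ofReal ((v x)^2) ∂μ :=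
        layercake_aux μ θ v hθ hv
    _ = (∫⁻ t in Set.Ioc 0 T, ∫⁻ x in {x | t < |θ x|}, ENNReal.ofReal ((v x)^2) ∂μ)
        + ∫⁻ t in Set.Ioi T, ∫⁻ x in {x | t < |θ x|}, ENNReal.ofReal ((v x)^2) ∂μ := by
        rw [← Set.Ioc_union_Ioi_eq_Ioi hT.le,
          lintegral_union measurableSet_Ioi (Set.Ioc_disjoint_Ioi le_rfl)]
    _ ≤ (∫⁻ t in Set.Ioc 0 T, N₂ ^ (2:ℝ) * W ^ b * (ENNReal.ofReal t) ^ (-b))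
        + ∫⁻ t in Set.Ioi T, N₁ ^ (2:ℝ) * W ^ a * (ENNReal.ofReal t) ^ (-a) := by
        refine add_le_add
          (setLIntegral_mono (hmeas_rb.const_mul _) fun t ht => ?_)
          (setLIntegral_mono (hmeas_ra.const_mul _) fun t ht => ?_)
        · exact hFbound r₂ b hr₂1 hb_def t ht.1
        · exact hFbound r₁ a hr₁1 ha_def t (hT.trans ht)
    _ = N₂ ^ (2:ℝ) * W ^ b * ENNReal.ofReal (T^(1-b)/(1-b))
        + N₁ ^ (2:ℝ) * W ^ a * ENNReal.ofReal (T^(1-a)/(a-1)) := by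
        rw [lintegral_const_mul _ hmeas_rb, lintegral_const_mul _ hmeas_ra,
          lint_Ioc hT hb0 hb1, lint_Ioi hT ha1]
    _ = ENNReal.ofReal (n₂ ^ (2:ℕ) * w ^ b * (T^(1-b)/(1-b))
          + n₁ ^ (2:ℕ) * w ^ a * (T^(1-a)/(a-1))) := by
        have hN2 : N₂ ^ (2:ℝ) = ENNReal.ofReal (n₂ ^ (2:ℕ)) := by
          conv_lhs => rw [← ENNReal.ofReal_toReal hN₂t]
          rw [← hn₂_def, ENNReal.ofReal_rpow_of_pos hn₂]
          congr 1
          rw [← Real.rpow_natCast n₂ 2]; norm_num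
        have hN1 : N₁ ^ (2:ℝ) = ENNReal.ofReal (n₁ ^ (2:ℕ)) := by
          conv_lhs => rw [← ENNReal.ofReal_toReal hN₁t]
          rw [← hn₁_def, ENNReal.ofReal_rpow_of_pos hn₁]
          congr 1
          rw [← Real.rpow_natCast n₁ 2]; norm_num
        have hWb : W ^ b = ENNReal.ofReal (w ^ b) := by
          conv_lhs => rw [← ENNReal.ofReal_toReal hWt]
          rw [← hw_def, ENNReal.ofReal_rpow_of_pos hwpos]
        have hWa : W ^ a = ENNReal.ofReal (w ^ a) := by
          conv_lhs => rw [← ENNReal.ofReal_toReal hWt]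
          rw [← hw_def, ENNReal.ofReal_rpow_of_pos hwpos]
        have e₂ : (0:ℝ) ≤ n₂ ^ (2:ℕ) := by positivity
        have e₁ : (0:ℝ) ≤ n₁ ^ (2:ℕ) := by positivity
        have ewb : (0:ℝ) ≤ n₂ ^ (2:ℕ) * w ^ b :=
          mul_nonneg e₂ (Real.rpow_nonneg hwpos.le _)
        have ewa : (0:ℝ) ≤ n₁ ^ (2:ℕ) * w ^ a :=
          mul_nonneg e₁ (Real.rpow_nonneg hwpos.le _)
        have hTb : (0:ℝ) ≤ T ^ (1-b) / (1-b) :=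
          div_nonneg (Real.rpow_nonneg hT.le _) (by linarith)
        have hadd : (0:ℝ) ≤ n₂ ^ (2:ℕ) * w ^ b * (T ^ (1-b) / (1-b)) :=
          mul_nonneg ewb hTb
        rw [hN2, hN1, hWb, hWa, ← ENNReal.ofReal_mul e₂,
          ← ENNReal.ofReal_mul e₁, ← ENNReal.ofReal_mul ewb,
          ← ENNReal.ofReal_mul ewa, ← ENNReal.ofReal_add hadd
            (mul_nonneg ewa (div_nonneg (Real.rpow_nonneg hT.le _) (by linarith)))]
    _ = ENNReal.ofReal ((2/(a-1)) * (w * (n₁ * n₂))) := by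
        rw [hT_def]
        exact congrArg _ (real_algebra_aux ha1 hab hwpos hn₁ hn₂)
    _ = ((2 / (a - 1)).toNNReal : ℝ≥0∞) * W * N₁ * N₂ := by
        rw [ENNReal.ofReal_mul hCpos.le, ENNReal.ofReal_mul hwpos.le,
          ENNReal.ofReal_mul (by positivity), ENNReal.ofReal_toReal hWt,
          ENNReal.ofReal_toReal hN₁t, ENNReal.ofReal_toReal hN₂t]
        rw [show ENNReal.ofReal (2/(a-1)) = ((2 / (a - 1)).toNNReal : ℝ≥0∞) from rfl]
        ring
end

section
/- Weak-Lorentz bound for ρu: let r ∈ (3, ∞), 3 < r₁ < r < r₂ < ∞ with 2/r = 1/r₁ + 1/r₂, and s = 2/(1 − 3/r). Suppose 0 ≤ ρ ≤ M on ℝ³ and ρ ∈ L²(ℝ³) ∩ L^{r₂}(ℝ³). Then for any vector field u, ‖ρu‖²_{L²} ≤ C(M, r) (1 + ‖u‖_{L^{r,∞}}^s)(‖ρ‖²_{L²} + 1), where ‖u‖_{L^{r,∞}} is the weak-L^r norm of u. -/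
open MeasureTheory ENNReal
open scoped NNReal

private lemma sq_eLpNorm_two' {α : Type*} [MeasurableSpace α] (μ : Measure α) {E : Type*}
    [NormedAddCommGroup E] (f : α → E) :
    eLpNorm f 2 μ ^ 2 = ∫⁻ x, (‖f x‖₊ : ℝ≥0∞) ^ 2 ∂μ := by
  rw [eLpNorm_eq_lintegral_rpow_enorm_toReal (by norm_num) (by norm_num)]
  rw [← ENNReal.rpow_natCast _ 2, ← ENNReal.rpow_mul]
  norm_num
  rfl

private lemma cover_lemma' (T y : ℝ) (hT : 0 < T) (hy : T < y) :
    ∃ k : ℕ, T * 2 ^ k < y ∧ y ≤ T * 2 ^ (k + 1) := by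
  classical
  have hne : ∃ n : ℕ, y ≤ T * 2 ^ (n+1) := by
    obtain ⟨n, hn⟩ := pow_unbounded_of_one_lt (y / T) (one_lt_two (α := ℝ))
    rw [div_lt_iff₀ hT] at hn
    refine ⟨n, ?_⟩
    have : (2:ℝ) ^ n ≤ 2 ^ (n+1) := by
      apply pow_le_pow_right₀ one_le_two (Nat.le_succ n)
    nlinarith
  refine ⟨Nat.find hne, ?_, Nat.find_spec hne⟩
  rcases Nat.eq_zero_or_pos (Nat.find hne) with h0 | hpos
  · rw [h0]; simpa using hy
  · have := Nat.find_min hne (m := Nat.find hne - 1) (by omega)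
    push_neg at this
    have h2 : T * 2 ^ (Nat.find hne - 1 + 1) < y := this
    rwa [Nat.sub_add_cancel hpos] at h2

private lemma term_calc' (r T : ℝ) (hT : 0 < T) (A : ℝ≥0∞) (k : ℕ) :
    (ENNReal.ofReal (T * 2 ^ (k+1))) ^ 2 * (A ^ r * (ENNReal.ofReal (T * 2 ^ k)) ^ (-r)) =
      4 * (A ^ r * (ENNReal.ofReal T) ^ (2 - r)) * ((2:ℝ≥0∞) ^ (2 - r)) ^ k := by
  set t := ENNReal.ofReal T with htdef
  have ht0 : t ≠ 0 := by simp [htdef, hT]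
  have httop : t ≠ ⊤ := ENNReal.ofReal_ne_top
  have h20 : (2:ℝ≥0∞) ≠ 0 := by norm_num
  have h2top : (2:ℝ≥0∞) ≠ ⊤ := by norm_num
  have e : ∀ m : ℕ, ENNReal.ofReal (T * 2 ^ m) = t * 2 ^ m := by
    intro m
    rw [ENNReal.ofReal_mul hT.le, ENNReal.ofReal_pow (by norm_num)]
    norm_num
    rfl
  rw [e, e]
  rw [ENNReal.mul_rpow_of_ne_zero ht0 (by positivity) (-r)]
  rw [mul_pow]
  have hp2 : ∀ m : ℕ, ((2:ℝ≥0∞) ^ m) ^ (-r) = (2:ℝ≥0∞) ^ ((m:ℝ) * (-r)) := by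
    intro m
    rw [← ENNReal.rpow_natCast 2 m, ← ENNReal.rpow_mul]
  have hq : ((2:ℝ≥0∞) ^ (2 - r)) ^ k = (2:ℝ≥0∞) ^ ((2 - r) * (k:ℝ)) := by
    rw [← ENNReal.rpow_natCast ((2:ℝ≥0∞) ^ (2-r)) k, ← ENNReal.rpow_mul]
  have ht2 : t ^ 2 * t ^ (-r) = t ^ (2 - r) := by
    rw [← ENNReal.rpow_natCast t 2, ← ENNReal.rpow_add _ _ ht0 httop, sub_eq_add_neg]
    norm_num
  have h2k : ((2:ℝ≥0∞) ^ (k+1)) ^ 2 = (2:ℝ≥0∞) ^ ((2:ℝ) * (k+1)) := by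
    rw [← pow_mul, ← ENNReal.rpow_natCast 2 ((k+1)*2)]
    congr 1
    push_cast
    ring
  rw [hp2, hq, h2k]
  have key : (2:ℝ≥0∞) ^ ((2:ℝ) * (k+1)) * ((2:ℝ≥0∞) ^ ((k:ℝ) * (-r))) =
      4 * (2:ℝ≥0∞) ^ ((2 - r) * (k:ℝ)) := by
    rw [← ENNReal.rpow_add _ _ h20 h2top]
    have h4 : (4:ℝ≥0∞) = (2:ℝ≥0∞) ^ (2:ℝ) := by
      rw [show (2:ℝ) = ((2:ℕ):ℝ) by norm_num, ENNReal.rpow_natCast]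
      norm_num
    rw [h4, ← ENNReal.rpow_add _ _ h20 h2top]
    ring_nf
  calc t ^ 2 * ((2:ℝ≥0∞) ^ ((2:ℝ)*(k+1))) * (A ^ r * (t ^ (-r) * (2:ℝ≥0∞) ^ ((k:ℝ) * (-r))))
      = A ^ r * (t ^ 2 * t ^ (-r)) * ((2:ℝ≥0∞) ^ ((2:ℝ)*(k+1)) * (2:ℝ≥0∞) ^ ((k:ℝ) * (-r))) := by
        ring
    _ = 4 * (A ^ r * t ^ (2 - r)) * (2:ℝ≥0∞) ^ ((2 - r) * (k:ℝ)) := by rw [ht2, key]; ring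

private lemma tail_bound' {α : Type*} [MeasurableSpace α] (μ : Measure α) (f : α → ℝ)
    (r : ℝ) (hr : 3 < r) (A : ℝ≥0∞)
    (hA : ∀ t : ℝ, 0 < t → μ {x | t < |f x|} ≤ A ^ r * (ENNReal.ofReal t) ^ (-r))
    (T : ℝ) (hT : 0 < T) :
    ∫⁻ x in {x | T < |f x|}, (‖f x‖₊ : ℝ≥0∞) ^ 2 ∂μ ≤
      8 * (A ^ r * (ENNReal.ofReal T) ^ (2 - r)) := by
  set Ak : ℕ → Set α := fun k => {x | T * 2 ^ k < |f x| ∧ |f x| ≤ T * 2 ^ (k+1)} with hAk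
  have hsub : {x | T < |f x|} ⊆ ⋃ k, Ak k := by
    intro x hx
    obtain ⟨k, h1, h2⟩ := cover_lemma' T |f x| hT hx
    exact Set.mem_iUnion.2 ⟨k, h1, h2⟩
  have hq1 : (2:ℝ≥0∞) ^ (2 - r) ≤ 2⁻¹ := by
    have : (2:ℝ≥0∞) ^ (2 - r) ≤ (2:ℝ≥0∞) ^ (-1:ℝ) :=
      ENNReal.rpow_le_rpow_of_exponent_le one_le_two (by linarith)
    simpa [ENNReal.rpow_neg_one] using this
  have hgeom : ∑' k : ℕ, ((2:ℝ≥0∞) ^ (2 - r)) ^ k ≤ 2 := by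
    rw [ENNReal.tsum_geometric]
    have h1 : (2:ℝ≥0∞)⁻¹ ≤ 1 - (2:ℝ≥0∞) ^ (2 - r) := by
      have h2 := tsub_le_tsub_left hq1 (1:ℝ≥0∞)
      calc (2:ℝ≥0∞)⁻¹ = 1 - 2⁻¹ := by
            rw [ENNReal.sub_eq_of_eq_add (by norm_num)]
            rw [ENNReal.inv_two_add_inv_two]
        _ ≤ 1 - (2:ℝ≥0∞) ^ (2 - r) := h2
    calc (1 - (2:ℝ≥0∞) ^ (2 - r))⁻¹ ≤ ((2:ℝ≥0∞)⁻¹)⁻¹ := ENNReal.inv_le_inv.2 h1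
      _ = 2 := inv_inv 2
  calc ∫⁻ x in {x | T < |f x|}, (‖f x‖₊ : ℝ≥0∞) ^ 2 ∂μ
      ≤ ∫⁻ x in ⋃ k, Ak k, (‖f x‖₊ : ℝ≥0∞) ^ 2 ∂μ := lintegral_mono_set hsub
    _ ≤ ∑' k, ∫⁻ x in Ak k, (‖f x‖₊ : ℝ≥0∞) ^ 2 ∂μ := lintegral_iUnion_le _ _
    _ ≤ ∑' k, (ENNReal.ofReal (T * 2 ^ (k+1))) ^ 2 *
          (A ^ r * (ENNReal.ofReal (T * 2 ^ k)) ^ (-r)) := by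
        refine ENNReal.tsum_le_tsum fun k => ?_
        have hstep : ∫⁻ x in Ak k, (‖f x‖₊ : ℝ≥0∞) ^ 2 ∂μ
            ≤ ∫⁻ _ in Ak k, (ENNReal.ofReal (T * 2 ^ (k+1))) ^ 2 ∂μ := by
          refine setLIntegral_mono (by measurability) fun x hx => ?_
          have h1 : ((‖f x‖₊ : ℝ≥0∞)) = ENNReal.ofReal |f x| := by
            rw [← Real.norm_eq_abs, ofReal_norm, enorm_eq_nnnorm]
          rw [h1]
          exact pow_le_pow_left' (ENNReal.ofReal_le_ofReal hx.2) 2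
        have hmeas : μ (Ak k) ≤ A ^ r * (ENNReal.ofReal (T * 2 ^ k)) ^ (-r) :=
          le_trans (measure_mono fun x hx => hx.1) (hA _ (by positivity))
        calc ∫⁻ x in Ak k, (‖f x‖₊ : ℝ≥0∞) ^ 2 ∂μ
            ≤ (ENNReal.ofReal (T * 2 ^ (k+1))) ^ 2 * μ (Ak k) := by
              simpa [lintegral_const, Measure.restrict_apply MeasurableSet.univ] using hstep
          _ ≤ _ := mul_le_mul_right hmeas _
    _ = ∑' k : ℕ, 4 * (A ^ r * (ENNReal.ofReal T) ^ (2 - r)) * ((2:ℝ≥0∞) ^ (2 - r)) ^ k :=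
        tsum_congr fun k => term_calc' r T hT A k
    _ = 4 * (A ^ r * (ENNReal.ofReal T) ^ (2 - r)) * ∑' k : ℕ, ((2:ℝ≥0∞) ^ (2 - r)) ^ k :=
        ENNReal.tsum_mul_left
    _ ≤ 4 * (A ^ r * (ENNReal.ofReal T) ^ (2 - r)) * 2 := mul_le_mul_right hgeom _
    _ = 8 * (A ^ r * (ENNReal.ofReal T) ^ (2 - r)) := by ring

private lemma weak_decay' {α : Type*} [MeasurableSpace α] (μ : Measure α) (g : α → ℝ)
    (r : ℝ) (hr : 3 < r) (A : ℝ≥0∞)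
    (hA' : ∀ t : ℝ, 0 < t → ENNReal.ofReal t * (μ {x | t < |g x|}) ^ (1/r) ≤ A)
    (t : ℝ) (ht : 0 < t) :
    μ {x | t < |g x|} ≤ A ^ r * (ENNReal.ofReal t) ^ (-r) := by
  have hr0 : (0:ℝ) < r := by linarith
  have h0 : ENNReal.ofReal t ≠ 0 := by simp [ht]
  have htop : ENNReal.ofReal t ≠ ⊤ := ENNReal.ofReal_ne_top
  have h1 : (μ {x | t < |g x|}) ^ (1/r) ≤ A / ENNReal.ofReal t := by
    rw [ENNReal.le_div_iff_mul_le (Or.inl h0) (Or.inl htop), mul_comm]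
    exact hA' t ht
  have h2 : μ {x | t < |g x|} = ((μ {x | t < |g x|}) ^ (1/r)) ^ r := by
    rw [← ENNReal.rpow_mul, one_div, inv_mul_cancel₀ (ne_of_gt hr0), ENNReal.rpow_one]
  rw [h2]
  calc ((μ {x | t < |g x|}) ^ (1/r)) ^ r ≤ (A / ENNReal.ofReal t) ^ r :=
        ENNReal.rpow_le_rpow h1 hr0.le
    _ = A ^ r * (ENNReal.ofReal t) ^ (-r) := by
        rw [ENNReal.div_rpow_of_nonneg _ _ hr0.le, ENNReal.rpow_neg, div_eq_mul_inv]

private lemma choose_T' (r : ℝ) (hr : 3 < r) (A : ℝ≥0∞) (hAtop : A ≠ ⊤) :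
    ∃ T : ℝ, 0 < T ∧ (ENNReal.ofReal T) ^ 2 ≤ 1 + A ^ (2 / (1 - 3/r)) ∧
      A ^ r * (ENNReal.ofReal T) ^ (2 - r) ≤ 1 := by
  have hr0 : (0:ℝ) < r := by linarith
  have hr2 : (0:ℝ) < r - 2 := by linarith
  have hr3 : (0:ℝ) < r - 3 := by linarith
  set s : ℝ := 2 / (1 - 3/r) with hs
  have hs' : s = 2 * r / (r - 3) := by
    rw [hs]; rw [show (1 - 3/r) = (r-3)/r by field_simp]; field_simp
  have hse : (r / (r-2)) * 2 ≤ s := by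
    rw [hs', div_mul_eq_mul_div, div_le_div_iff₀ hr2 hr3]
    nlinarith
  set a : ℝ := A.toReal with ha
  have ha0 : 0 ≤ a := ENNReal.toReal_nonneg
  have hAa : A = ENNReal.ofReal a := (ENNReal.ofReal_toReal hAtop).symm
  rcases le_or_gt a 1 with hle | hlt
  · refine ⟨1, one_pos, ?_, ?_⟩
    · simp
    · have hA1 : A ≤ 1 := by
        rw [hAa]; exact le_trans (ENNReal.ofReal_le_ofReal hle) (by simp)
      have : A ^ r ≤ 1 := by
        calc A ^ r ≤ 1 ^ r := ENNReal.rpow_le_rpow hA1 hr0.le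
          _ = 1 := ENNReal.one_rpow r
      simpa using this
  · refine ⟨a ^ (r / (r-2)), by positivity, ?_, ?_⟩
    · have hA1 : (1:ℝ≥0∞) ≤ A := by
        rw [hAa]
        calc (1:ℝ≥0∞) = ENNReal.ofReal 1 := by simp
          _ ≤ ENNReal.ofReal a := ENNReal.ofReal_le_ofReal hlt.le
      have h1 : ENNReal.ofReal (a ^ (r / (r-2))) = A ^ (r / (r-2)) := by
        rw [hAa, ← ENNReal.ofReal_rpow_of_pos (by linarith)]
      rw [h1, ← ENNReal.rpow_natCast (A ^ (r / (r-2))) 2, ← ENNReal.rpow_mul]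
      calc A ^ ((r / (r-2)) * (2:ℕ)) ≤ A ^ s := by
            apply ENNReal.rpow_le_rpow_of_exponent_le hA1
            push_cast
            exact hse
        _ ≤ 1 + A ^ s := le_add_self
    · have hA0 : A ≠ 0 := by
        rw [hAa]
        simp only [ne_eq, ENNReal.ofReal_eq_zero, not_le]
        linarith
      have h1 : ENNReal.ofReal (a ^ (r / (r-2))) = A ^ (r / (r-2)) := by
        rw [hAa, ← ENNReal.ofReal_rpow_of_pos (by linarith)]
      rw [h1, ← ENNReal.rpow_mul]
      have he : (r / (r-2)) * (2 - r) = -r := by field_simp; ring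
      rw [he, ← ENNReal.rpow_add _ _ hA0 hAtop]
      simp

/-- Weak-Lorentz bound for `ρu`: for `3 < r₁ < r < r₂ < ∞` with
`2/r = 1/r₁ + 1/r₂` and `s = 2/(1 − 3/r)`, if `0 ≤ ρ ≤ M` on `ℝ³` and
`ρ ∈ L² ∩ L^{r₂}`, then for any vector field `u`,
`‖ρu‖²_{L²} ≤ C(M,r)(1 + ‖u‖_{L^{r,∞}}^s)(‖ρ‖²_{L²} + 1)`. -/
theorem weak_lorentz_bound_rho_u (r r₁ r₂ M : ℝ)
    (hr₁ : 3 < r₁) (h₁r : r₁ < r) (hrr₂ : r < r₂)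
    (hsum : 2 / r = 1 / r₁ + 1 / r₂) (hM : 0 < M) :
    ∃ C : ℝ≥0, 0 < C ∧
      ∀ (ρ : (Fin 3 → ℝ) → ℝ) (u : (Fin 3 → ℝ) → (Fin 3 → ℝ)),
        Measurable ρ → Measurable u →
        (∀ x, 0 ≤ ρ x ∧ ρ x ≤ M) →
        eLpNorm ρ 2 volume < ⊤ →
        eLpNorm ρ (ENNReal.ofReal r₂) volume < ⊤ →
        (eLpNorm (fun x => ρ x • u x) 2 volume) ^ 2 ≤
          (C : ℝ≥0∞) *
            (1 + (lorentzNorm volume r ⊤ (fun x => ‖u x‖)) ^ (2 / (1 - 3 / r))) *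
            ((eLpNorm ρ 2 volume) ^ 2 + 1) := by
  have hr : 3 < r := lt_trans hr₁ h₁r
  have hs0 : 0 < 2 / (1 - 3/r) := by
    have h1 : 0 < 1 - 3/r := by
      rw [sub_pos, div_lt_one (by linarith)]; linarith
    positivity
  refine ⟨Real.toNNReal (1 + 8 * M ^ 2), Real.toNNReal_pos.2 (by positivity), ?_⟩
  intro ρ u hρ hu hρM _ _
  set A : ℝ≥0∞ := lorentzNorm volume r ⊤ (fun x => ‖u x‖) with hAdef
  set s : ℝ := 2 / (1 - 3/r) with hsdef
  set E : ℝ≥0∞ := eLpNorm ρ 2 volume ^ 2 with hEdef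
  have hCoe : ((Real.toNNReal (1 + 8 * M ^ 2) : ℝ≥0) : ℝ≥0∞) = ENNReal.ofReal (1 + 8 * M ^ 2) :=
    rfl
  rcases eq_or_ne A ⊤ with hAtop | hAtop
  · -- RHS is ⊤
    have h1 : A ^ s = ⊤ := by rw [hAtop]; exact ENNReal.top_rpow_of_pos hs0
    have h2 : (1:ℝ≥0∞) + A ^ s = ⊤ := by rw [h1, add_top]
    rw [h2]
    have hC0 : (Real.toNNReal (1 + 8 * M ^ 2) : ℝ≥0∞) ≠ 0 := by
      rw [hCoe]
      simp only [ne_eq, ENNReal.ofReal_eq_zero, not_le]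
      positivity
    rw [ENNReal.mul_top hC0]
    have hE1 : E + 1 ≠ 0 := by simp
    rw [ENNReal.top_mul hE1]
    exact le_top
  · -- main case
    have hA' : ∀ t : ℝ, 0 < t →
        ENNReal.ofReal t * (volume {x | t < |‖u x‖|}) ^ (1/r) ≤ A := by
      intro t ht
      rw [hAdef, lorentzNorm, if_pos rfl]
      refine le_trans ?_ (le_iSup _ t)
      exact le_iSup (fun _ : 0 < t => ENNReal.ofReal t * (volume {x | t < |‖u x‖|}) ^ (1/r)) ht
    have hA : ∀ t : ℝ, 0 < t →
        volume {x | t < |‖u x‖|} ≤ A ^ r * (ENNReal.ofReal t) ^ (-r) :=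
      weak_decay' volume (fun x => ‖u x‖) r hr A hA'
    obtain ⟨T, hT0, hTa, hTb⟩ := choose_T' r hr A hAtop
    set S : Set (Fin 3 → ℝ) := {x | T < |‖u x‖|} with hSdef
    have hSm : MeasurableSet S := measurableSet_lt measurable_const hu.norm.abs
    have hpt : ∀ x, ((‖ρ x • u x‖₊ : ℝ≥0∞)) ^ 2 =
        (‖ρ x‖₊ : ℝ≥0∞) ^ 2 * (‖u x‖₊ : ℝ≥0∞) ^ 2 := by
      intro x
      rw [nnnorm_smul]
      push_cast
      ring
    have hmeas_u2 : Measurable fun x => ((‖u x‖₊ : ℝ≥0∞)) ^ 2 :=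
      (hu.nnnorm.coe_nnreal_ennreal).pow_const 2
    have hmeas_ρ2 : Measurable fun x => ((‖ρ x‖₊ : ℝ≥0∞)) ^ 2 :=
      (hρ.nnnorm.coe_nnreal_ennreal).pow_const 2
    -- bound on S
    have hboundS : ∫⁻ x in S, (‖ρ x‖₊ : ℝ≥0∞) ^ 2 * (‖u x‖₊ : ℝ≥0∞) ^ 2 ∂volume ≤
        ENNReal.ofReal (8 * M ^ 2) := by
      have h1 : ∫⁻ x in S, (‖ρ x‖₊ : ℝ≥0∞) ^ 2 * (‖u x‖₊ : ℝ≥0∞) ^ 2 ∂volume ≤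
          ∫⁻ x in S, (ENNReal.ofReal M) ^ 2 * (‖u x‖₊ : ℝ≥0∞) ^ 2 ∂volume := by
        refine setLIntegral_mono (hmeas_u2.const_mul _) fun x _ => ?_
        gcongr
        have : ((‖ρ x‖₊ : ℝ≥0∞)) = ENNReal.ofReal (ρ x) := by
          rw [← enorm_eq_nnnorm, ← ofReal_norm, Real.norm_eq_abs, abs_of_nonneg (hρM x).1]
        rw [this]
        exact ENNReal.ofReal_le_ofReal (hρM x).2
      have h2 : ∫⁻ x in S, (ENNReal.ofReal M) ^ 2 * (‖u x‖₊ : ℝ≥0∞) ^ 2 ∂volume =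
          (ENNReal.ofReal M) ^ 2 * ∫⁻ x in S, (‖u x‖₊ : ℝ≥0∞) ^ 2 ∂volume :=
        lintegral_const_mul _ hmeas_u2
      have h3 : ∫⁻ x in S, (‖u x‖₊ : ℝ≥0∞) ^ 2 ∂volume ≤ 8 := by
        have := tail_bound' volume (fun x => ‖u x‖) r hr A hA T hT0
        simp only [nnnorm_norm] at this
        calc ∫⁻ x in S, (‖u x‖₊ : ℝ≥0∞) ^ 2 ∂volume
            ≤ 8 * (A ^ r * (ENNReal.ofReal T) ^ (2 - r)) := this
          _ ≤ 8 * 1 := mul_le_mul_right hTb _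
          _ = 8 := mul_one _
      calc ∫⁻ x in S, (‖ρ x‖₊ : ℝ≥0∞) ^ 2 * (‖u x‖₊ : ℝ≥0∞) ^ 2 ∂volume
          ≤ (ENNReal.ofReal M) ^ 2 * ∫⁻ x in S, (‖u x‖₊ : ℝ≥0∞) ^ 2 ∂volume := h2 ▸ h1
        _ ≤ (ENNReal.ofReal M) ^ 2 * 8 := mul_le_mul_right h3 _
        _ = ENNReal.ofReal (8 * M ^ 2) := by
            rw [← ENNReal.ofReal_pow hM.le]
            rw [← ENNReal.ofReal_ofNat 8, ← ENNReal.ofReal_mul (by positivity)]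
            ring_nf
    -- bound on Sᶜ
    have hboundSc : ∫⁻ x in Sᶜ, (‖ρ x‖₊ : ℝ≥0∞) ^ 2 * (‖u x‖₊ : ℝ≥0∞) ^ 2 ∂volume ≤
        (1 + A ^ s) * E := by
      have h1 : ∫⁻ x in Sᶜ, (‖ρ x‖₊ : ℝ≥0∞) ^ 2 * (‖u x‖₊ : ℝ≥0∞) ^ 2 ∂volume ≤
          ∫⁻ x in Sᶜ, (‖ρ x‖₊ : ℝ≥0∞) ^ 2 * (ENNReal.ofReal T) ^ 2 ∂volume := by
        refine setLIntegral_mono (hmeas_ρ2.mul_const _) fun x hx => ?_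
        gcongr
        have hxT : ‖u x‖ ≤ T := by
          have := hx
          simp only [hSdef, Set.mem_compl_iff, Set.mem_setOf_eq, not_lt, abs_norm] at this
          exact this
        have : ((‖u x‖₊ : ℝ≥0∞)) = ENNReal.ofReal ‖u x‖ := by
          rw [ofReal_norm, enorm_eq_nnnorm]
        rw [this]
        exact ENNReal.ofReal_le_ofReal hxT
      have h2 : ∫⁻ x in Sᶜ, (‖ρ x‖₊ : ℝ≥0∞) ^ 2 * (ENNReal.ofReal T) ^ 2 ∂volume =
          (∫⁻ x in Sᶜ, (‖ρ x‖₊ : ℝ≥0∞) ^ 2 ∂volume) * (ENNReal.ofReal T) ^ 2 :=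
        lintegral_mul_const _ hmeas_ρ2
      have h3 : ∫⁻ x in Sᶜ, (‖ρ x‖₊ : ℝ≥0∞) ^ 2 ∂volume ≤ E := by
        rw [hEdef, sq_eLpNorm_two']
        exact setLIntegral_le_lintegral _ _
      calc ∫⁻ x in Sᶜ, (‖ρ x‖₊ : ℝ≥0∞) ^ 2 * (‖u x‖₊ : ℝ≥0∞) ^ 2 ∂volume
          ≤ (∫⁻ x in Sᶜ, (‖ρ x‖₊ : ℝ≥0∞) ^ 2 ∂volume) * (ENNReal.ofReal T) ^ 2 := h2 ▸ h1
        _ ≤ E * (1 + A ^ s) := by exact mul_le_mul' h3 hTa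
        _ = (1 + A ^ s) * E := mul_comm _ _
    -- combine
    have hsplit : (eLpNorm (fun x => ρ x • u x) 2 volume) ^ 2 =
        (∫⁻ x in S, (‖ρ x‖₊ : ℝ≥0∞) ^ 2 * (‖u x‖₊ : ℝ≥0∞) ^ 2 ∂volume) +
        ∫⁻ x in Sᶜ, (‖ρ x‖₊ : ℝ≥0∞) ^ 2 * (‖u x‖₊ : ℝ≥0∞) ^ 2 ∂volume := by
      rw [sq_eLpNorm_two']
      rw [lintegral_congr hpt]
      exact (lintegral_add_compl _ hSm).symm
    rw [hsplit, hCoe]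
    have hone : (1:ℝ≥0∞) ≤ 1 + A ^ s := le_add_self.trans_eq (by rw [add_comm])
    calc (∫⁻ x in S, (‖ρ x‖₊ : ℝ≥0∞) ^ 2 * (‖u x‖₊ : ℝ≥0∞) ^ 2 ∂volume) +
        ∫⁻ x in Sᶜ, (‖ρ x‖₊ : ℝ≥0∞) ^ 2 * (‖u x‖₊ : ℝ≥0∞) ^ 2 ∂volume
        ≤ ENNReal.ofReal (8 * M ^ 2) + (1 + A ^ s) * E := add_le_add hboundS hboundSc
      _ ≤ (1 + A ^ s) * ENNReal.ofReal (8 * M ^ 2) + (1 + A ^ s) * E := by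
          gcongr
          exact le_mul_of_one_le_left' hone
      _ = (1 + A ^ s) * (E + ENNReal.ofReal (8 * M ^ 2)) := by ring
      _ ≤ (1 + A ^ s) * (ENNReal.ofReal (1 + 8 * M ^ 2) * (E + 1)) := by
          gcongr
          have hge1 : (1:ℝ≥0∞) ≤ ENNReal.ofReal (1 + 8 * M ^ 2) := by
            rw [ENNReal.one_le_ofReal]; nlinarith
          have hge2 : ENNReal.ofReal (8 * M ^ 2) ≤ ENNReal.ofReal (1 + 8 * M ^ 2) :=
            ENNReal.ofReal_le_ofReal (by nlinarith)
          calc E + ENNReal.ofReal (8 * M ^ 2)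
              ≤ ENNReal.ofReal (1 + 8 * M ^ 2) * E + ENNReal.ofReal (1 + 8 * M ^ 2) :=
                add_le_add (le_mul_of_one_le_left' hge1) hge2
            _ = ENNReal.ofReal (1 + 8 * M ^ 2) * (E + 1) := by ring
      _ = ENNReal.ofReal (1 + 8 * M ^ 2) * (1 + A ^ s) * (E + 1) := by ring
end
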